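/- Let α ∈ (0,1). With H(ρ,w) = |w|²/ρ^α for ρ > 0, H(0,0) = 0, H = +∞ otherwise, the subdifferential of H at points of ℝ_+ × ℝ^d is: ∂H(ρ,w) = {(−α|w|²/ρ^{α+1}, 2w/ρ^α)} if ρ > 0, and ∂H(0,0) = ℝ_− × {0}. -/

import Mathlib

open scoped RealInnerProductSpace
open Classical

/-- `H(ρ,w) = |w|²/ρ^α` if `ρ > 0`, `H(0,0) = 0`, `+∞` otherwise. -/
noncomputable def Hfun (d : ℕ) (α : ℝ) (p : ℝ × EuclideanSpace ℝ (Fin d)) : EReal :=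
  if 0 < p.1 then ((‖p.2‖ ^ 2 / p.1 ^ α : ℝ) : EReal)
  else if p.1 = 0 ∧ p.2 = 0 then 0 else ⊤

/-- The convex subdifferential of `H` at `p`: the set of `(a,b)` such that
`H(p') ≥ H(p) + a(ρ'−ρ) + ⟨b, w'−w⟩` for all `p' = (ρ',w')`. -/
def subdiffH (d : ℕ) (α : ℝ) (p : ℝ × EuclideanSpace ℝ (Fin d)) :
    Set (ℝ × EuclideanSpace ℝ (Fin d)) :=
  {q | ∀ p' : ℝ × EuclideanSpace ℝ (Fin d),
    Hfun d α p + ((q.1 * (p'.1 - p.1) + ⟪q.2, p'.2 - p.2⟫ : ℝ) : EReal) ≤ Hfun d α p'}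

/-- If `f` has a derivative at `x` and `a` is a "subgradient slope" near `x`, then `a = f'`. -/
lemma subgrad_deriv {f : ℝ → ℝ} {f' x a : ℝ} (hf : HasDerivAt f f' x)
    (h : ∀ᶠ y in nhds x, f x + a * (y - x) ≤ f y) : a = f' := by
  have hg : HasDerivAt (fun y => f y - f x - a * (y - x)) (f' - a) x := by
    have h1 : HasDerivAt (fun y : ℝ => a * (y - x)) a x := by
      simpa using ((hasDerivAt_id x).sub_const x).const_mul a
    exact (hf.sub_const (f x)).sub h1
  have hmin : IsLocalMin (fun y => f y - f x - a * (y - x)) x := by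
    filter_upwards [h] with y hy
    simp only [sub_self, mul_zero, sub_zero]
    linarith
  have h0 := hmin.hasDerivAt_eq_zero hg
  linarith

/-- The gradient inequality for `H` at positive `ρ`. -/
lemma grad_ineq {d : ℕ} {α : ℝ} (hα0 : 0 < α) (hα1 : α < 1) (ρ ρ' : ℝ)
    (hρ : 0 < ρ) (hρ' : 0 < ρ') (w w' : EuclideanSpace ℝ (Fin d)) :
    ‖w‖ ^ 2 / ρ ^ α + (-α * ‖w‖ ^ 2 / ρ ^ (α + 1)) * (ρ' - ρ)
      + ⟪((2 : ℝ) / ρ ^ α) • w, w' - w⟫ ≤ ‖w'‖ ^ 2 / ρ' ^ α := by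
  have hX : 0 < ρ ^ α := Real.rpow_pos_of_pos hρ α
  have hY : 0 < ρ' ^ α := Real.rpow_pos_of_pos hρ' α
  have hpow : ρ ^ (α + 1) = ρ ^ α * ρ := by
    rw [Real.rpow_add hρ, Real.rpow_one]
  have hinner : ⟪((2 : ℝ) / ρ ^ α) • w, w' - w⟫ = (2 / ρ ^ α) * (⟪w, w'⟫ - ‖w‖ ^ 2) := by
    rw [real_inner_smul_left, inner_sub_right, real_inner_self_eq_norm_sq]
  rw [hpow, hinner]
  set X := ρ ^ α with hXdef
  set Y := ρ' ^ α with hYdef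
  have h2i : 2 * ⟪w, w'⟫ * X * Y ≤ Y ^ 2 * ‖w‖ ^ 2 + X ^ 2 * ‖w'‖ ^ 2 := by
    nlinarith [sq_nonneg (Y * ‖w‖ - X * ‖w'‖), real_inner_le_norm w w',
      mul_pos hX hY, norm_nonneg w, norm_nonneg w']
  have hB : Y * ρ ≤ X * ρ + α * (ρ' - ρ) * X := by
    have hg := Real.geom_mean_le_arith_mean2_weighted (by linarith : (0:ℝ) ≤ 1 - α) hα0.le
      zero_le_one (le_of_lt (div_pos hρ' hρ)) (by ring)
    rw [Real.one_rpow, one_mul, mul_one] at hg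
    rw [Real.div_rpow hρ'.le hρ.le] at hg
    have hYle : Y ≤ ((1 - α) + α * (ρ' / ρ)) * X := (div_le_iff₀ hX).mp hg
    calc Y * ρ ≤ (((1 - α) + α * (ρ' / ρ)) * X) * ρ :=
          mul_le_mul_of_nonneg_right hYle hρ.le
      _ = X * ρ + α * (ρ' - ρ) * X := by field_simp; ring
  have hXρ : 0 < X * ρ := mul_pos hX hρ
  have hfrac : ‖w‖ ^ 2 / X + -α * ‖w‖ ^ 2 / (X * ρ) * (ρ' - ρ) + 2 / X * (⟪w, w'⟫ - ‖w‖ ^ 2)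
      = (‖w‖ ^ 2 * ρ - α * ‖w‖ ^ 2 * (ρ' - ρ) + 2 * (⟪w, w'⟫ - ‖w‖ ^ 2) * ρ) / (X * ρ) := by
    field_simp
    ring
  rw [hfrac, div_le_div_iff₀ hXρ hY]
  have h2 : ‖w‖ ^ 2 * Y * (Y * ρ - X * ρ - α * (ρ' - ρ) * X) ≤ 0 :=
    mul_nonpos_of_nonneg_of_nonpos (by positivity) (by linarith)
  nlinarith [h2, mul_le_mul_of_nonneg_right h2i hρ.le, hX, hXρ]

/-- for `ρ > 0`, `∂H(ρ,w) = {(−α|w|²/ρ^{α+1}, 2w/ρ^α)}`, and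
`∂H(0,0) = ℝ₋ × {0}`. -/
theorem subdiffH_eq (d : ℕ) (hd : 1 ≤ d) (α : ℝ) (hα0 : 0 < α) (hα1 : α < 1) :
    (∀ (ρ : ℝ) (w : EuclideanSpace ℝ (Fin d)), 0 < ρ →
      subdiffH d α (ρ, w) =
        {(-α * ‖w‖ ^ 2 / ρ ^ (α + 1), ((2 : ℝ) / ρ ^ α) • w)}) ∧
    subdiffH d α (0, 0) = {q | q.1 ≤ 0 ∧ q.2 = 0} := by
  have hH0 : Hfun d α (0, 0) = 0 := by simp [Hfun]
  constructor
  · intro ρ w hρ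
    have hX : 0 < ρ ^ α := Real.rpow_pos_of_pos hρ α
    have hXρ1 : 0 < ρ ^ (α + 1) := Real.rpow_pos_of_pos hρ (α + 1)
    have hpow : ρ ^ (α + 1) = ρ ^ α * ρ := by
      rw [Real.rpow_add hρ, Real.rpow_one]
    ext q
    obtain ⟨a, b⟩ := q
    simp only [subdiffH, Set.mem_setOf_eq, Set.mem_singleton_iff, Prod.mk.injEq]
    constructor
    · intro hq
      have hH : Hfun d α (ρ, w) = ((‖w‖ ^ 2 / ρ ^ α : ℝ) : EReal) := if_pos hρ
      have hb : ∀ v : EuclideanSpace ℝ (Fin d), ⟪b, v⟫ = 2 * ⟪w, v⟫ / ρ ^ α := by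
        intro v
        have hf : HasDerivAt (fun t : ℝ => ‖w + t • v‖ ^ 2 / ρ ^ α) (2 * ⟪w, v⟫ / ρ ^ α) 0 := by
          have hfeq : (fun t : ℝ => ‖w + t • v‖ ^ 2 / ρ ^ α)
              = fun t => (‖w‖ ^ 2 + 2 * ⟪w, v⟫ * t + ‖v‖ ^ 2 * t ^ 2) / ρ ^ α := by
            funext t
            rw [norm_add_sq_real, real_inner_smul_right, norm_smul]
            simp [mul_pow, sq_abs]
            ring
          rw [hfeq]
          have hpoly : HasDerivAt (fun t : ℝ => ‖w‖ ^ 2 + 2 * ⟪w, v⟫ * t + ‖v‖ ^ 2 * t ^ 2)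
              (2 * ⟪w, v⟫) 0 := by
            have h1 : HasDerivAt (fun t : ℝ => ‖w‖ ^ 2 + 2 * ⟪w, v⟫ * t + ‖v‖ ^ 2 * t ^ 2)
                (2 * ⟪w, v⟫ * 1 + ‖v‖ ^ 2 * (2 * 0 ^ 1)) 0 := by
              exact (((hasDerivAt_id 0).const_mul (2 * ⟪w, v⟫)).const_add (‖w‖ ^ 2)).add
                ((hasDerivAt_pow 2 0).const_mul (‖v‖ ^ 2))
            simpa using h1
          exact hpoly.div_const _
        have hev : ∀ᶠ t in nhds (0 : ℝ),
            (fun t : ℝ => ‖w + t • v‖ ^ 2 / ρ ^ α) 0 + ⟪b, v⟫ * (t - 0)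
              ≤ (fun t : ℝ => ‖w + t • v‖ ^ 2 / ρ ^ α) t := by
          apply Filter.Eventually.of_forall
          intro t
          have h := hq (ρ, w + t • v)
          rw [hH, show Hfun d α (ρ, w + t • v) = ((‖w + t • v‖ ^ 2 / ρ ^ α : ℝ) : EReal)
            from if_pos hρ] at h
          rw [← EReal.coe_add, EReal.coe_le_coe_iff] at h
          simp only [sub_self, mul_zero, add_sub_cancel_left, real_inner_smul_right] at h
          simp only [zero_smul, add_zero, sub_zero]
          linarith
        exact subgrad_deriv hf hev
      have hbeq : b = ((2 : ℝ) / ρ ^ α) • w := by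
        apply ext_inner_right ℝ
        intro v
        rw [hb v, real_inner_smul_left]
        ring
      have ha : a = -α * ‖w‖ ^ 2 / ρ ^ (α + 1) := by
        have hf : HasDerivAt (fun y : ℝ => ‖w‖ ^ 2 / y ^ α) (-α * ‖w‖ ^ 2 / ρ ^ (α + 1)) ρ := by
          have h1 : HasDerivAt (fun y : ℝ => y ^ α) (α * ρ ^ (α - 1)) ρ :=
            Real.hasDerivAt_rpow_const (Or.inl hρ.ne')
          have h2 : HasDerivAt (fun y : ℝ => ‖w‖ ^ 2 / y ^ α)
              ((0 * ρ ^ α - ‖w‖ ^ 2 * (α * ρ ^ (α - 1))) / (ρ ^ α) ^ 2) ρ :=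
            (hasDerivAt_const ρ (‖w‖ ^ 2)).div h1 hX.ne'
          convert h2 using 1
          have e1 : (ρ ^ α) ^ 2 = ρ ^ α * ρ ^ α := sq (ρ ^ α) ▸ rfl
          have e2 : ρ ^ (α - 1) = ρ ^ α / ρ := by
            rw [Real.rpow_sub hρ, Real.rpow_one]
          rw [e1, e2, hpow]
          field_simp
          ring
        have hev : ∀ᶠ y in nhds ρ,
            (fun y : ℝ => ‖w‖ ^ 2 / y ^ α) ρ + a * (y - ρ)
              ≤ (fun y : ℝ => ‖w‖ ^ 2 / y ^ α) y := by
          filter_upwards [eventually_gt_nhds hρ] with y hy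
          have h := hq (y, w)
          rw [hH, show Hfun d α (y, w) = ((‖w‖ ^ 2 / y ^ α : ℝ) : EReal) from if_pos hy] at h
          rw [← EReal.coe_add, EReal.coe_le_coe_iff] at h
          simp only [sub_self, inner_zero_right] at h
          simpa using h
        exact subgrad_deriv hf hev
      exact ⟨ha, hbeq⟩
    · rintro ⟨rfl, rfl⟩
      rintro ⟨ρ', w'⟩
      have hH : Hfun d α (ρ, w) = ((‖w‖ ^ 2 / ρ ^ α : ℝ) : EReal) := if_pos hρ
      rcases lt_trichotomy 0 ρ' with h' | h' | h'
      · rw [hH, show Hfun d α (ρ', w') = ((‖w'‖ ^ 2 / ρ' ^ α : ℝ) : EReal) from if_pos h',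
          ← EReal.coe_add, EReal.coe_le_coe_iff]
        have := grad_ineq hα0 hα1 ρ ρ' hρ h' w w'
        linarith
      · subst h'
        by_cases hw' : w' = 0
        · subst hw'
          rw [hH, hH0, ← EReal.coe_add, show (0 : EReal) = ((0 : ℝ) : EReal) from rfl,
            EReal.coe_le_coe_iff]
          have hi : ⟪((2 : ℝ) / ρ ^ α) • w, (0 : EuclideanSpace ℝ (Fin d)) - w⟫
              = -(2 / ρ ^ α * ‖w‖ ^ 2) := by
            rw [real_inner_smul_left, inner_sub_right, inner_zero_right,
              real_inner_self_eq_norm_sq]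
            ring
          rw [hi, hpow]
          have hw2 : 0 ≤ ‖w‖ ^ 2 := sq_nonneg _
          have key : ‖w‖ ^ 2 / ρ ^ α + -α * ‖w‖ ^ 2 / (ρ ^ α * ρ) * (0 - ρ)
              - 2 / ρ ^ α * ‖w‖ ^ 2 = (α - 1) * (‖w‖ ^ 2 / ρ ^ α) := by
            field_simp
            ring
          have : 0 ≤ ‖w‖ ^ 2 / ρ ^ α := by positivity
          nlinarith [key]
        · have : Hfun d α ((0 : ℝ), w') = ⊤ := by simp [Hfun, hw']
          rw [show ((0:ℝ), w').1 = (0:ℝ) from rfl] at *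
          rw [this]
          exact le_top
      · have : Hfun d α (ρ', w') = ⊤ := by
          simp [Hfun, not_lt.mpr h'.le, h'.ne]
        rw [this]
        exact le_top
  · ext q
    obtain ⟨a, b⟩ := q
    simp only [subdiffH, Set.mem_setOf_eq]
    constructor
    · intro hq
      have ha : a ≤ 0 := by
        have h := hq (1, 0)
        rw [hH0, zero_add] at h
        have h1 : Hfun d α ((1 : ℝ), (0 : EuclideanSpace ℝ (Fin d)))
            = ((0 : ℝ) : EReal) := by
          simp [Hfun]
        rw [h1, EReal.coe_le_coe_iff] at h
        simpa using h
      have hb : b = 0 := by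
        by_contra hbne
        set γ : ℝ := (1 + α) / 2 with hγdef
        have hγ1 : γ < 1 := by rw [hγdef]; linarith
        have hγα : α < γ := by rw [hγdef]; linarith
        have hγ0 : 0 < γ := by rw [hγdef]; linarith
        have key : ∀ t : ℝ, 0 < t →
            ‖b‖ ^ 2 ≤ t ^ (γ - α) * ‖b‖ ^ 2 - a * t ^ (1 - γ) := by
          intro t ht
          have htγ : 0 < t ^ γ := Real.rpow_pos_of_pos ht γ
          have htα : 0 < t ^ α := Real.rpow_pos_of_pos ht α
          have h := hq (t, t ^ γ • b)
          rw [hH0, zero_add,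
            show Hfun d α (t, t ^ γ • b) = ((‖t ^ γ • b‖ ^ 2 / t ^ α : ℝ) : EReal)
              from if_pos ht, EReal.coe_le_coe_iff] at h
          have h' : a * t + t ^ γ * ‖b‖ ^ 2 ≤ (t ^ γ) ^ 2 * ‖b‖ ^ 2 / t ^ α := by
            have hn : ‖t ^ γ • b‖ ^ 2 = (t ^ γ) ^ 2 * ‖b‖ ^ 2 := by
              rw [norm_smul]
              simp [mul_pow, sq_abs]
            rw [hn] at h
            simp only [sub_zero, real_inner_smul_right, real_inner_self_eq_norm_sq] at h
            linarith
          rw [Real.rpow_sub ht, Real.rpow_sub ht, Real.rpow_one, ← sub_nonneg]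
          have heq : t ^ γ / t ^ α * ‖b‖ ^ 2 - a * (t / t ^ γ) - ‖b‖ ^ 2
              = ((t ^ γ) ^ 2 * ‖b‖ ^ 2 / t ^ α - a * t - t ^ γ * ‖b‖ ^ 2) / t ^ γ := by
            field_simp
          rw [heq]
          apply div_nonneg _ htγ.le
          have hd2 : (t ^ γ) ^ 2 * ‖b‖ ^ 2 / t ^ α - a * t - t ^ γ * ‖b‖ ^ 2 ≥ 0 := by
            linarith
          linarith
        have hT : Filter.Tendsto (fun t : ℝ => t ^ (γ - α) * ‖b‖ ^ 2 - a * t ^ (1 - γ))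
            (nhdsWithin 0 (Set.Ioi 0)) (nhds 0) := by
          have t1 : Filter.Tendsto (fun t : ℝ => t ^ (γ - α)) (nhdsWithin 0 (Set.Ioi 0))
              (nhds 0) := by
            have := (Real.continuousAt_rpow_const 0 (γ - α) (Or.inr (by linarith))).tendsto
            rw [Real.zero_rpow (by linarith : (0:ℝ) < γ - α).ne'] at this
            exact this.mono_left nhdsWithin_le_nhds
          have t2 : Filter.Tendsto (fun t : ℝ => t ^ (1 - γ)) (nhdsWithin 0 (Set.Ioi 0))
              (nhds 0) := by
            have := (Real.continuousAt_rpow_const 0 (1 - γ) (Or.inr (by linarith))).tendsto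
            rw [Real.zero_rpow (by linarith : (0:ℝ) < 1 - γ).ne'] at this
            exact this.mono_left nhdsWithin_le_nhds
          have := (t1.mul_const (‖b‖ ^ 2)).sub (t2.const_mul a)
          simpa using this
        have hle : ‖b‖ ^ 2 ≤ 0 := by
          apply ge_of_tendsto hT
          filter_upwards [self_mem_nhdsWithin] with t ht
          exact key t ht
        have : ‖b‖ = 0 := by nlinarith [norm_nonneg b]
        exact hbne (norm_eq_zero.mp this)
      exact ⟨ha, hb⟩
    · rintro ⟨ha, hb⟩
      rintro ⟨ρ', w'⟩
      rw [hH0, zero_add]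
      simp only [hb, sub_zero, inner_zero_left, add_zero]
      rcases lt_trichotomy 0 ρ' with h' | h' | h'
      · rw [show Hfun d α (ρ', w') = ((‖w'‖ ^ 2 / ρ' ^ α : ℝ) : EReal) from if_pos h',
          EReal.coe_le_coe_iff]
        have h1 : a * (ρ' - 0) ≤ 0 := mul_nonpos_of_nonpos_of_nonneg ha (by linarith)
        have h2 : 0 ≤ ‖w'‖ ^ 2 / ρ' ^ α := by positivity
        linarith
      · subst h'
        by_cases hw' : w' = 0
        · subst hw'
          rw [hH0]
          simp
        · have hT : Hfun d α ((0 : ℝ), w') = ⊤ := by simp [Hfun, hw']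
          rw [hT]
          exact le_top
      · have : Hfun d α (ρ', w') = ⊤ := by
          simp [Hfun, not_lt.mpr h'.le, h'.ne]
        rw [this]
        exact le_top
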